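/- In a quadrilateral with vertices p1, p, p', pi (in order), if both p and p' lie strictly between the vertical lines through p1 and pi, then at least one of the interior angles at p or p' is at least 90 degrees; consequently if |p1 p'| ≤ 1 and the angle at p is at least 90°, then |p p'| ≤ |p1 p'| ≤ 1. -/

import Mathlib

open EuclideanGeometry

/-- Cross product of two planar vectors. -/
def cross (u v : EuclideanSpace ℝ (Fin 2)) : ℝ := u 0 * v 1 - u 1 * v 0

lemma inner_expand (x y : EuclideanSpace ℝ (Fin 2)) :
    (inner ℝ x y : ℝ) = x 0 * y 0 + x 1 * y 1 := by
  simp [PiLp.inner_apply, Fin.sum_univ_two, mul_comm]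

lemma angle_ge_of_inner_nonpos {x y : EuclideanSpace ℝ (Fin 2)}
    (h : (inner ℝ x y : ℝ) ≤ 0) : Real.pi / 2 ≤ InnerProductGeometry.angle x y := by
  by_contra hlt
  push_neg at hlt
  have hcos : 0 < Real.cos (InnerProductGeometry.angle x y) := by
    apply Real.cos_pos_of_mem_Ioo
    constructor
    · have := InnerProductGeometry.angle_nonneg x y
      have := Real.pi_pos
      linarith
    · exact hlt
  rw [InnerProductGeometry.cos_angle] at hcos
  have hd : (inner ℝ x y : ℝ) / (‖x‖ * ‖y‖) ≤ 0 :=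
    div_nonpos_of_nonpos_of_nonneg h (by positivity)
  linarith

lemma inner_nonpos_of_angle_ge {x y : EuclideanSpace ℝ (Fin 2)}
    (h : Real.pi / 2 ≤ InnerProductGeometry.angle x y) : (inner ℝ x y : ℝ) ≤ 0 := by
  have hcos : Real.cos (InnerProductGeometry.angle x y) ≤ 0 :=
    Real.cos_nonpos_of_pi_div_two_le_of_le h
      (by linarith [InnerProductGeometry.angle_le_pi x y, Real.pi_pos])
  rw [InnerProductGeometry.cos_angle] at hcos
  rcases eq_or_lt_of_le (mul_nonneg (norm_nonneg x) (norm_nonneg y)) with hz | hz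
  · rcases mul_eq_zero.mp hz.symm with h0 | h0
    · simp [norm_eq_zero.mp h0]
    · simp [norm_eq_zero.mp h0]
  · have h2 := mul_le_mul_of_nonneg_right hcos (le_of_lt hz)
    rwa [div_mul_cancel₀ _ (ne_of_gt hz), zero_mul] at h2

lemma quad_key (a0 a1 u0 u1 b0 b1 : ℝ) (ha0 : 0 < a0) (hu0 : 0 ≤ u0) (hb0 : 0 < b0)
    (hc1 : a0 * u1 - a1 * u0 ≤ 0) (hc2 : u0 * b1 - u1 * b0 ≤ 0)
    (i1 : a0 * u0 + a1 * u1 < 0) (i2 : u0 * b0 + u1 * b1 < 0) : False := by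
  rcases lt_trichotomy u1 0 with hu | hu | hu
  · have h1 : u1 * b1 < 0 := by nlinarith [mul_nonneg hu0 hb0.le]
    have hb1 : 0 < b1 := by
      by_contra hb1
      push_neg at hb1
      nlinarith [mul_nonneg (neg_nonneg.mpr hu.le) (neg_nonneg.mpr hb1)]
    have := mul_nonneg hu0 hb1.le
    have := mul_neg_of_neg_of_pos hu hb0
    linarith
  · subst hu
    nlinarith [mul_nonneg ha0.le hu0]
  · have h1 : a1 * u1 < 0 := by nlinarith [mul_nonneg ha0.le hu0]
    have ha1 : a1 < 0 := by
      by_contra ha1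
      push_neg at ha1
      nlinarith [mul_nonneg ha1 hu.le]
    have := mul_nonpos_of_nonpos_of_nonneg ha1.le hu0
    have := mul_pos ha0 hu
    linarith

theorem stmt_1 (p1 p p' pi : EuclideanSpace ℝ (Fin 2))
    (hx1 : p1 0 < p 0) (hx2 : p 0 ≤ p' 0) (hx3 : p' 0 < pi 0)
    (hc1 : cross (p - p1) (p' - p) ≤ 0)
    (hc2 : cross (p' - p) (pi - p') ≤ 0)
    (hc3 : cross (pi - p') (p1 - pi) ≤ 0)
    (hc4 : cross (p1 - pi) (p - p1) ≤ 0) :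
    (Real.pi / 2 ≤ ∠ p1 p p' ∨ Real.pi / 2 ≤ ∠ p p' pi) ∧
      (dist p1 p' ≤ 1 → Real.pi / 2 ≤ ∠ p1 p p' →
        dist p p' ≤ dist p1 p' ∧ dist p p' ≤ 1) := by
  simp only [cross, PiLp.sub_apply] at hc1 hc2
  have hang1 : ∠ p1 p p' = InnerProductGeometry.angle (p1 - p) (p' - p) := rfl
  have hang2 : ∠ p p' pi = InnerProductGeometry.angle (p - p') (pi - p') := rfl
  constructor
  · by_contra hcon
    push_neg at hcon
    obtain ⟨h1, h2⟩ := hcon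
    rw [hang1] at h1
    rw [hang2] at h2
    have i1 : ¬ ((inner ℝ (p1 - p) (p' - p) : ℝ) ≤ 0) := fun h =>
      absurd (angle_ge_of_inner_nonpos h) (not_le.mpr h1)
    have i2 : ¬ ((inner ℝ (p - p') (pi - p') : ℝ) ≤ 0) := fun h =>
      absurd (angle_ge_of_inner_nonpos h) (not_le.mpr h2)
    push_neg at i1 i2
    rw [inner_expand] at i1 i2
    simp only [PiLp.sub_apply] at i1 i2
    exact quad_key (p 0 - p1 0) (p 1 - p1 1) (p' 0 - p 0) (p' 1 - p 1)
      (pi 0 - p' 0) (pi 1 - p' 1) (by linarith) (by linarith) (by linarith)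
      (by linarith) (by linarith) (by nlinarith [i1]) (by nlinarith [i2])
  · intro hd1 hang
    have hinner : (inner ℝ (p1 - p) (p' - p) : ℝ) ≤ 0 := inner_nonpos_of_angle_ge (hang1 ▸ hang)
    rw [inner_expand] at hinner
    simp only [PiLp.sub_apply] at hinner
    have key : dist p p' ≤ dist p1 p' := by
      rw [EuclideanSpace.dist_eq, EuclideanSpace.dist_eq]
      apply Real.sqrt_le_sqrt
      rw [Fin.sum_univ_two, Fin.sum_univ_two]
      simp only [Real.dist_eq, sq_abs]
      nlinarith [hinner]
    exact ⟨key, le_trans key hd1⟩
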